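/- For a probability measure ρ on S^{d-1} and the weighted mean v_α = (∫ v e^{-αE(v)} dρ)/(∫ e^{-αE(v)} dρ), one has ∫ |v − v_α|^2 dρ(v) ≤ 4 C_{α,E} V(ρ), where C_{α,E} = e^{α(sup E − inf E)} and V(ρ) = (1/2)∫|v − E(ρ)|^2 dρ. -/
import Mathlib

open MeasureTheory Metric Real RealInnerProductSpace

set_option maxHeartbeats 1000000 in
theorem stmt_3 {d : ℕ} (e : EuclideanSpace ℝ (Fin d) → ℝ) (α : ℝ) (hα : 0 < α)
    (hcont : ContinuousOn e (sphere (0 : EuclideanSpace ℝ (Fin d)) 1))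
    (hbdd : BddAbove (e '' sphere (0 : EuclideanSpace ℝ (Fin d)) 1) ∧
      BddBelow (e '' sphere (0 : EuclideanSpace ℝ (Fin d)) 1))
    (ρ : Measure (EuclideanSpace ℝ (Fin d))) [IsProbabilityMeasure ρ]
    (hsph : ∀ᵐ v ∂ρ, ‖v‖ = 1)
    (m : EuclideanSpace ℝ (Fin d)) (hm : m = ∫ w, w ∂ρ)
    (V : ℝ) (hV : V = (1 / 2) * ∫ v, ‖v - m‖ ^ 2 ∂ρ)
    (vα : EuclideanSpace ℝ (Fin d))
    (hvα : vα = (∫ v, Real.exp (-α * e v) ∂ρ)⁻¹ • ∫ v, Real.exp (-α * e v) • v ∂ρ)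
    (C : ℝ)
    (hC : C = Real.exp (α * (sSup (e '' sphere (0 : EuclideanSpace ℝ (Fin d)) 1)
      - sInf (e '' sphere (0 : EuclideanSpace ℝ (Fin d)) 1)))) :
    ∫ v, ‖v - vα‖ ^ 2 ∂ρ ≤ 4 * C * V := by
  set S := sphere (0 : EuclideanSpace ℝ (Fin d)) 1 with hS
  set f : EuclideanSpace ℝ (Fin d) → ℝ := fun v => Real.exp (-α * e v) with hf
  set a := sInf (e '' S) with ha
  set b := sSup (e '' S) with hb
  have hSmem : ∀ᵐ v ∂ρ, v ∈ S := by
    filter_upwards [hsph] with v hv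
    simpa [hS, mem_sphere_iff_norm] using hv
  have hrestrict : ρ.restrict S = ρ :=
    Measure.restrict_eq_self_of_ae_mem hSmem
  -- measurability of e and f
  have he_meas : AEStronglyMeasurable e ρ := by
    rw [← hrestrict]
    exact hcont.aestronglyMeasurable isClosed_sphere.measurableSet
  have hf_meas : AEStronglyMeasurable f ρ :=
    Real.continuous_exp.comp_aestronglyMeasurable (he_meas.const_mul (-α))
  -- a.e. bounds on e
  have hab : ∀ᵐ v ∂ρ, a ≤ e v ∧ e v ≤ b := by
    filter_upwards [hSmem] with v hv
    exact ⟨csInf_le hbdd.2 ⟨v, hv, rfl⟩, le_csSup hbdd.1 ⟨v, hv, rfl⟩⟩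
  have hfu : ∀ᵐ v ∂ρ, f v ≤ Real.exp (-α * a) := by
    filter_upwards [hab] with v hv
    exact Real.exp_le_exp.2 (by nlinarith [hv.1])
  have hfl : ∀ᵐ v ∂ρ, Real.exp (-α * b) ≤ f v := by
    filter_upwards [hab] with v hv
    exact Real.exp_le_exp.2 (by nlinarith [hv.2])
  have hfpos : ∀ v, 0 < f v := fun v => Real.exp_pos _
  -- integrabilities
  have hIf : Integrable f ρ := by
    refine ⟨hf_meas, HasFiniteIntegral.of_bounded (C := Real.exp (-α * a)) ?_⟩
    filter_upwards [hfu] with v hv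
    rwa [Real.norm_eq_abs, abs_of_pos (hfpos v)]
  have hIF : Integrable (fun v => f v • v) ρ := by
    refine ⟨hf_meas.smul aestronglyMeasurable_id, HasFiniteIntegral.of_bounded
      (C := Real.exp (-α * a)) ?_⟩
    filter_upwards [hfu, hsph] with v hv hv1
    rw [norm_smul, Real.norm_eq_abs, abs_of_pos (hfpos v), hv1, mul_one]
    exact hv
  have hInormsq : ∀ c : EuclideanSpace ℝ (Fin d), Integrable (fun v => ‖v - c‖ ^ 2) ρ := by
    intro c
    refine ⟨((continuous_id.sub continuous_const).norm.pow 2).aestronglyMeasurable,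
      HasFiniteIntegral.of_bounded (C := (1 + ‖c‖) ^ 2) ?_⟩
    filter_upwards [hsph] with v hv
    have h1 : ‖v - c‖ ≤ 1 + ‖c‖ := by
      calc ‖v - c‖ ≤ ‖v‖ + ‖c‖ := norm_sub_le _ _
      _ = 1 + ‖c‖ := by rw [hv]
    rw [Real.norm_eq_abs, abs_of_nonneg (by positivity)]
    exact pow_le_pow_left₀ (norm_nonneg _) h1 2
  have hIfnormsq : ∀ c : EuclideanSpace ℝ (Fin d),
      Integrable (fun v => f v * ‖v - c‖ ^ 2) ρ := by
    intro c
    refine ⟨hf_meas.mul (hInormsq c).1, HasFiniteIntegral.of_bounded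
      (C := Real.exp (-α * a) * (1 + ‖c‖) ^ 2) ?_⟩
    filter_upwards [hsph, hfu] with v hv hvu
    have h1 : ‖v - c‖ ≤ 1 + ‖c‖ := by
      calc ‖v - c‖ ≤ ‖v‖ + ‖c‖ := norm_sub_le _ _
      _ = 1 + ‖c‖ := by rw [hv]
    rw [Real.norm_eq_abs, abs_of_nonneg (by positivity)]
    have := pow_le_pow_left₀ (norm_nonneg _) h1 2
    have h2 : (0:ℝ) < f v := hfpos v
    nlinarith [Real.exp_pos (-α * a)]
  set Z := ∫ v, f v ∂ρ with hZ
  have hZpos : 0 < Z := by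
    have : Real.exp (-α * b) ≤ Z := by
      calc Real.exp (-α * b) = ∫ _v, Real.exp (-α * b) ∂ρ := by simp
      _ ≤ Z := integral_mono_ae (integrable_const _) hIf hfl
    linarith [Real.exp_pos (-α * b)]
  have hIeq : (∫ v, f v • v ∂ρ) = Z • vα := by
    rw [hvα, smul_inv_smul₀ hZpos.ne']
  -- key: weighted second moment around vα is ≤ around m
  have key : ∫ v, f v * ‖v - vα‖ ^ 2 ∂ρ ≤ ∫ v, f v * ‖v - m‖ ^ 2 ∂ρ := by
    have hdiff : ∫ v, (f v * ‖v - m‖ ^ 2 - f v * ‖v - vα‖ ^ 2) ∂ρ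
        = Z * ‖vα - m‖ ^ 2 := by
      have hptw : ∀ v, f v * ‖v - m‖ ^ 2 - f v * ‖v - vα‖ ^ 2
          = 2 * ⟪f v • v, vα - m⟫ + (‖m‖ ^ 2 - ‖vα‖ ^ 2) * f v := by
        intro v
        rw [norm_sub_sq_real, norm_sub_sq_real, real_inner_smul_left, inner_sub_right]
        ring
      rw [integral_congr_ae (Filter.Eventually.of_forall hptw)]
      have hcomm : (fun v => ⟪f v • v, vα - m⟫) = (fun v => ⟪vα - m, f v • v⟫) := by
        funext v; exact real_inner_comm _ _
      have hint1 : Integrable (fun v => 2 * ⟪f v • v, vα - m⟫) ρ := by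
        have h0 : Integrable (fun v => ⟪vα - m, f v • v⟫) ρ := hIF.const_inner _
        have := h0.const_mul 2
        rwa [show (fun v => 2 * ⟪vα - m, f v • v⟫) = (fun v => 2 * ⟪f v • v, vα - m⟫) by
          funext v; rw [real_inner_comm]] at this
      have hint2 : Integrable (fun v => (‖m‖ ^ 2 - ‖vα‖ ^ 2) * f v) ρ :=
        hIf.const_mul _
      rw [integral_add hint1 hint2]
      have h1 : ∫ v, ⟪f v • v, vα - m⟫ ∂ρ = ⟪(Z • vα : EuclideanSpace ℝ (Fin d)), vα - m⟫ := by
        rw [hcomm, integral_inner hIF, hIeq, real_inner_comm]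
      rw [integral_const_mul, h1, integral_const_mul, ← hZ, real_inner_smul_left]
      rw [norm_sub_sq_real, inner_sub_right, real_inner_self_eq_norm_sq]
      ring
    have h0 : 0 ≤ Z * ‖vα - m‖ ^ 2 := by positivity
    rw [← hdiff, integral_sub (hIfnormsq m) (hIfnormsq vα)] at h0
    linarith
  -- chain of inequalities
  have step1 : ∫ v, ‖v - vα‖ ^ 2 ∂ρ ≤ Real.exp (α * b) * ∫ v, f v * ‖v - vα‖ ^ 2 ∂ρ := by
    rw [← integral_const_mul]
    refine integral_mono_ae (hInormsq vα) ((hIfnormsq vα).const_mul _) ?_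
    filter_upwards [hfl] with v hv
    have h1 : 1 ≤ Real.exp (α * b) * f v := by
      have := mul_le_mul_of_nonneg_left hv (le_of_lt (Real.exp_pos (α * b)))
      rwa [← Real.exp_add, show α * b + -α * b = 0 by ring, Real.exp_zero] at this
    nlinarith [sq_nonneg ‖v - vα‖, norm_nonneg (v - vα)]
  have step2 : ∫ v, f v * ‖v - m‖ ^ 2 ∂ρ ≤ Real.exp (-α * a) * ∫ v, ‖v - m‖ ^ 2 ∂ρ := by
    rw [← integral_const_mul]
    refine integral_mono_ae (hIfnormsq m) ((hInormsq m).const_mul _) ?_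
    filter_upwards [hfu] with v hv
    nlinarith [sq_nonneg ‖v - m‖, norm_nonneg (v - m)]
  have hCval : C = Real.exp (α * b) * Real.exp (-α * a) := by
    rw [hC, ← Real.exp_add]; congr 1; ring
  have hVge : 0 ≤ V := by
    have hVnn : 0 ≤ ∫ v, ‖v - m‖ ^ 2 ∂ρ := integral_nonneg fun v => by positivity
    rw [hV]; linarith
  have hVnn : 0 ≤ ∫ v, ‖v - m‖ ^ 2 ∂ρ := integral_nonneg fun v => by positivity
  have hCpos : 0 < C := by rw [hC]; exact Real.exp_pos _
  calc ∫ v, ‖v - vα‖ ^ 2 ∂ρ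
      ≤ Real.exp (α * b) * ∫ v, f v * ‖v - vα‖ ^ 2 ∂ρ := step1
    _ ≤ Real.exp (α * b) * ∫ v, f v * ‖v - m‖ ^ 2 ∂ρ := by
        exact mul_le_mul_of_nonneg_left key (le_of_lt (Real.exp_pos _))
    _ ≤ Real.exp (α * b) * (Real.exp (-α * a) * ∫ v, ‖v - m‖ ^ 2 ∂ρ) := by
        exact mul_le_mul_of_nonneg_left step2 (le_of_lt (Real.exp_pos _))
    _ = C * (2 * V) := by rw [hCval, hV]; ring
    _ ≤ 4 * C * V := by nlinarith [hCpos, hVge]
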